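/- Let U ⊸ X ⊸ (Y_s, Y_c) where receiver Y_s is less noisy than Y_c, meaning I(U';Y_s) ≥ I(U';Y_c) for every random variable U' with U' ⊸ X ⊸ (Y_s,Y_c). Then for a memoryless channel used n times without feedback, and any random variable M with M ⊸ X^n ⊸ (Y_s^n, Y_c^n): I(Y_s^{i−1}; Y_{c,i} | M) ≥ I(Y_c^{i−1}; Y_{c,i} | M) for all 1 ≤ i ≤ n. -/

import Mathlib

open Finset

/-- Shannon entropy (in bits) of the random variable `X` on the finite probability
space `(Ω, p)`, with the convention `0 · log 0 = 0`. -/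
noncomputable def ent {Ω α : Type*} [Fintype Ω] [Fintype α] [DecidableEq α]
    (p : Ω → ℝ) (X : Ω → α) : ℝ :=
  -∑ x : α, (∑ ω ∈ univ.filter (fun ω => X ω = x), p ω) *
      Real.logb 2 (∑ ω ∈ univ.filter (fun ω => X ω = x), p ω)

/-- Mutual information `I(X;Y) = H(X) + H(Y) − H(X,Y)` (in bits). -/
noncomputable def mutInf {Ω α β : Type*} [Fintype Ω] [Fintype α] [DecidableEq α]
    [Fintype β] [DecidableEq β] (p : Ω → ℝ) (X : Ω → α) (Y : Ω → β) : ℝ :=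
  ent p X + ent p Y - ent p (fun ω => (X ω, Y ω))

/-- Conditional mutual information
`I(X;Y|Z) = H(X,Z) + H(Y,Z) − H(X,Y,Z) − H(Z)` (in bits). -/
noncomputable def condMutInf {Ω α β γ : Type*} [Fintype Ω] [Fintype α] [DecidableEq α]
    [Fintype β] [DecidableEq β] [Fintype γ] [DecidableEq γ]
    (p : Ω → ℝ) (X : Ω → α) (Y : Ω → β) (Z : Ω → γ) : ℝ :=
  ent p (fun ω => (X ω, Z ω)) + ent p (fun ω => (Y ω, Z ω))
    - ent p (fun ω => (X ω, Y ω, Z ω)) - ent p Z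

/-- `p` is a probability mass function on the finite sample space `Ω`. -/
def IsProb {Ω : Type*} [Fintype Ω] (p : Ω → ℝ) : Prop :=
  (∀ ω, 0 ≤ p ω) ∧ ∑ ω, p ω = 1


set_option linter.unusedSectionVars false
set_option linter.unnecessarySeqFocus false
set_option maxHeartbeats 2000000
set_option synthInstance.maxSize 1024
set_option synthInstance.maxHeartbeats 1000000

section auxdst
variable {Ω Ω' α α' β β' γ δ : Type*} [Fintype Ω] [Fintype Ω'] [Fintype α] [DecidableEq α]
  [Fintype α'] [DecidableEq α'] [Fintype β] [DecidableEq β] [Fintype β'] [DecidableEq β']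
  [Fintype γ] [DecidableEq γ] [Fintype δ] [DecidableEq δ]

noncomputable def dst (p : Ω → ℝ) (X : Ω → α) (a : α) : ℝ :=
  ∑ ω ∈ univ.filter (fun ω => X ω = a), p ω

lemma dst_eq (p : Ω → ℝ) (X : Ω → α) (a : α) :
    dst p X a = ∑ ω, if X ω = a then p ω else 0 := by rw [dst, sum_filter]

lemma ent_eq (p : Ω → ℝ) (X : Ω → α) :
    ent p X = -∑ a : α, dst p X a * Real.logb 2 (dst p X a) := rfl

lemma dst_nonneg {p : Ω → ℝ} (hp : ∀ ω, 0 ≤ p ω) (X : Ω → α) (a : α) :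
    0 ≤ dst p X a := Finset.sum_nonneg fun ω _ => hp ω

lemma sum_dst (p : Ω → ℝ) (X : Ω → α) : ∑ a, dst p X a = ∑ ω, p ω := by
  simp only [dst_eq]
  rw [Finset.sum_comm]
  simp

lemma dst_id (p : Ω → ℝ) [DecidableEq Ω] (a : Ω) : dst p id a = p a := by
  simp [dst_eq]

lemma dst_comp_inj (p : Ω → ℝ) (X : Ω → α) {e : α → α'} (he : Function.Injective e)
    (a : α) : dst p (fun ω => e (X ω)) (e a) = dst p X a := by
  simp only [dst_eq]
  exact Finset.sum_congr rfl fun ω _ => by simp [he.eq_iff]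

lemma ent_comp (p : Ω → ℝ) (X : Ω → α) {e : α → α'} (he : Function.Injective e) :
    ent p (fun ω => e (X ω)) = ent p X := by
  simp only [ent_eq]
  congr 1
  have himg : ∑ b ∈ univ.image e, dst p (fun ω => e (X ω)) b *
        Real.logb 2 (dst p (fun ω => e (X ω)) b)
      = ∑ a : α, dst p X a * Real.logb 2 (dst p X a) := by
    rw [Finset.sum_image (fun x _ y _ h => he h)]
    exact Finset.sum_congr rfl fun a _ => by rw [dst_comp_inj p X he]
  rw [← himg]
  refine (Finset.sum_subset (Finset.subset_univ _) ?_).symm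
  intro b _ hb
  have h0 : dst p (fun ω => e (X ω)) b = 0 := by
    rw [dst_eq]
    refine Finset.sum_eq_zero fun ω _ => if_neg fun h => hb ?_
    exact Finset.mem_image.2 ⟨X ω, Finset.mem_univ _, h⟩
  simp [h0]

lemma ent_comp' (p : Ω → ℝ) (X : Ω → α) (X' : Ω → α') {e : α → α'}
    (he : Function.Injective e) (hX : ∀ ω, X' ω = e (X ω)) : ent p X' = ent p X := by
  have h : X' = fun ω => e (X ω) := funext hX
  rw [h, ent_comp p X he]

lemma ent_congr_dst {p : Ω → ℝ} {p' : Ω' → ℝ} {X : Ω → α} {X' : Ω' → α}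
    (h : ∀ a, dst p X a = dst p' X' a) : ent p X = ent p' X' := by
  simp only [ent_eq, h]

lemma dst_pair_fst (p : Ω → ℝ) (X : Ω → α) (Y : Ω → β) (a : α) :
    dst p X a = ∑ b, dst p (fun ω => (X ω, Y ω)) (a, b) := by
  simp only [dst_eq]
  rw [Finset.sum_comm]
  refine Finset.sum_congr rfl fun ω _ => ?_
  rw [Finset.sum_eq_single (Y ω)] <;> simp +contextual [Prod.ext_iff] <;> tauto

lemma dst_pair_snd (p : Ω → ℝ) (X : Ω → α) (Y : Ω → β) (b : β) :
    dst p Y b = ∑ a, dst p (fun ω => (X ω, Y ω)) (a, b) := by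
  simp only [dst_eq]
  rw [Finset.sum_comm]
  refine Finset.sum_congr rfl fun ω _ => ?_
  rw [Finset.sum_eq_single (X ω)] <;> simp +contextual [Prod.ext_iff] <;> tauto

lemma dst_quad_marg (p : Ω → ℝ) (A : Ω → α) (B : Ω → β) (C : Ω → γ) (D : Ω → δ)
    (a : α) (b : β) :
    dst p (fun ω => (A ω, B ω)) (a, b)
      = ∑ cd : γ × δ, dst p (fun ω => (A ω, B ω, C ω, D ω)) (a, b, cd.1, cd.2) := by
  simp only [dst_eq]
  rw [Finset.sum_comm]
  refine Finset.sum_congr rfl fun ω _ => ?_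
  rw [Finset.sum_eq_single ((C ω, D ω) : γ × δ)] <;>
    simp +contextual [Prod.ext_iff] <;> tauto

lemma dst_marg14 (p : Ω → ℝ) (A : Ω → α) (B : Ω → β) (C : Ω → γ) (D : Ω → δ)
    (a : α) (d : δ) :
    dst p (fun ω => (A ω, D ω)) (a, d)
      = ∑ bc : β × γ, dst p (fun ω => (A ω, B ω, C ω, D ω)) (a, bc.1, bc.2, d) := by
  simp only [dst_eq]
  rw [Finset.sum_comm]
  refine Finset.sum_congr rfl fun ω _ => ?_
  rw [Finset.sum_eq_single ((B ω, C ω) : β × γ)] <;>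
    simp +contextual [Prod.ext_iff] <;> tauto

lemma dst_marg13 (p : Ω → ℝ) (A : Ω → α) (B : Ω → β) (C : Ω → γ) (D : Ω → δ)
    (a : α) (c : γ) :
    dst p (fun ω => (A ω, C ω)) (a, c)
      = ∑ bd : β × δ, dst p (fun ω => (A ω, B ω, C ω, D ω)) (a, bd.1, c, bd.2) := by
  simp only [dst_eq]
  rw [Finset.sum_comm]
  refine Finset.sum_congr rfl fun ω _ => ?_
  rw [Finset.sum_eq_single ((B ω, D ω) : β × δ)] <;>
    simp +contextual [Prod.ext_iff] <;> tauto

lemma mutInf_congr {p : Ω → ℝ} {p' : Ω' → ℝ} {X : Ω → α} {Y : Ω → β}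
    {X' : Ω' → α} {Y' : Ω' → β}
    (h : ∀ a b, dst p (fun ω => (X ω, Y ω)) (a, b) = dst p' (fun ω => (X' ω, Y' ω)) (a, b)) :
    mutInf p X Y = mutInf p' X' Y' := by
  have hX : ∀ a, dst p X a = dst p' X' a := fun a => by
    rw [dst_pair_fst p X Y, dst_pair_fst p' X' Y']; exact Finset.sum_congr rfl fun b _ => h a b
  have hY : ∀ b, dst p Y b = dst p' Y' b := fun b => by
    rw [dst_pair_snd p X Y, dst_pair_snd p' X' Y']; exact Finset.sum_congr rfl fun a _ => h a b
  have e1 : ent p X = ent p' X' := ent_congr_dst hX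
  have e2 : ent p Y = ent p' Y' := ent_congr_dst hY
  have e3 : ent p (fun ω => (X ω, Y ω)) = ent p' (fun ω => (X' ω, Y' ω)) :=
    ent_congr_dst (fun ab => h ab.1 ab.2)
  unfold mutInf
  rw [e1, e2, e3]

lemma mutInf_comm (p : Ω → ℝ) (X : Ω → α) (Y : Ω → β) :
    mutInf p X Y = mutInf p Y X := by
  unfold mutInf
  rw [ent_comp' p (fun ω => (Y ω, X ω)) (fun ω => (X ω, Y ω)) Prod.swap_injective
    (fun ω => rfl)]
  ring

lemma mutInf_comp₁ (p : Ω → ℝ) (X : Ω → α) (Y : Ω → β) {e : α → α'}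
    (he : Function.Injective e) : mutInf p (fun ω => e (X ω)) Y = mutInf p X Y := by
  unfold mutInf
  rw [ent_comp p X he, ent_comp' p (fun ω => (X ω, Y ω)) (fun ω => (e (X ω), Y ω))
    (he.prodMap Function.injective_id) (fun ω => rfl)]

lemma condMutInf_comp₁ (p : Ω → ℝ) (X : Ω → α) (Y : Ω → β) (Z : Ω → γ) {e : α → α'}
    (he : Function.Injective e) : condMutInf p (fun ω => e (X ω)) Y Z = condMutInf p X Y Z := by
  unfold condMutInf
  rw [ent_comp' p (fun ω => (X ω, Z ω)) (fun ω => (e (X ω), Z ω))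
    (he.prodMap Function.injective_id) (fun ω => rfl),
    ent_comp' p (fun ω => (X ω, Y ω, Z ω)) (fun ω => (e (X ω), Y ω, Z ω))
    (he.prodMap Function.injective_id) (fun ω => rfl)]

lemma condMutInf_chain (p : Ω → ℝ) (A : Ω → α) (B : Ω → α') (Y : Ω → β) (Z : Ω → γ) :
    condMutInf p (fun ω => (A ω, B ω)) Y Z
      = condMutInf p B Y Z + condMutInf p A Y (fun ω => (B ω, Z ω)) := by
  unfold condMutInf
  have e1 : ent p (fun ω => (Y ω, B ω, Z ω)) = ent p (fun ω => (B ω, (Y ω, Z ω))) :=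
    ent_comp' p _ _ (e := fun x : α' × β × γ => (x.2.1, (x.1, x.2.2)))
      (fun x y h => by
        obtain ⟨x1, x2, x3⟩ := x; obtain ⟨y1, y2, y3⟩ := y
        simp_all [Prod.ext_iff]) (fun ω => rfl)
  have e2 : ent p (fun ω => ((A ω, B ω), Y ω, Z ω))
      = ent p (fun ω => (A ω, (Y ω, (B ω, Z ω)))) :=
    ent_comp' p _ _ (e := fun x : α × β × α' × γ => ((x.1, x.2.2.1), (x.2.1, x.2.2.2)))
      (fun x y h => by
        obtain ⟨x1, x2, x3, x4⟩ := x; obtain ⟨y1, y2, y3, y4⟩ := y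
        simp_all [Prod.ext_iff]) (fun ω => rfl)
  have e3 : ent p (fun ω => ((A ω, B ω), Z ω)) = ent p (fun ω => (A ω, (B ω, Z ω))) :=
    ent_comp' p _ _ (e := fun x : α × α' × γ => ((x.1, x.2.1), x.2.2))
      (fun x y h => by
        obtain ⟨x1, x2, x3⟩ := x; obtain ⟨y1, y2, y3⟩ := y
        simp_all [Prod.ext_iff]) (fun ω => rfl)
  rw [← e1, ← e2, ← e3]
  ring

noncomputable def cnd (p : Ω → ℝ) (Z : Ω → γ) (z : γ) (ω : Ω) : ℝ :=
  if Z ω = z then p ω / dst p Z z else 0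

lemma cnd_nonneg {p : Ω → ℝ} (hp : ∀ ω, 0 ≤ p ω) (Z : Ω → γ) (z : γ) (ω : Ω) :
    0 ≤ cnd p Z z ω := by
  unfold cnd
  split_ifs
  · exact div_nonneg (hp ω) (dst_nonneg hp Z z)
  · exact le_refl 0

lemma dst_cnd (p : Ω → ℝ) (Z : Ω → γ) (z : γ) (X : Ω → α) (a : α) :
    dst (cnd p Z z) X a = dst p (fun ω => (X ω, Z ω)) (a, z) / dst p Z z := by
  simp only [dst_eq, cnd, Finset.sum_div]
  refine Finset.sum_congr rfl fun ω _ => ?_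
  by_cases h1 : X ω = a <;> by_cases h2 : Z ω = z <;>
    simp [h1, h2, Prod.ext_iff, zero_div]

lemma sum_cnd {p : Ω → ℝ} (Z : Ω → γ) (z : γ) (h : dst p Z z ≠ 0) :
    ∑ ω, cnd p Z z ω = 1 := by
  simp only [cnd]
  rw [← Finset.sum_filter, ← Finset.sum_div]
  rw [show (∑ ω ∈ univ.filter (fun ω => Z ω = z), p ω) = dst p Z z from rfl, div_self h]

lemma dst_pair_le {p : Ω → ℝ} (hp : ∀ ω, 0 ≤ p ω) (X : Ω → α) (Z : Ω → γ) (a : α) (z : γ) :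
    dst p (fun ω => (X ω, Z ω)) (a, z) ≤ dst p Z z := by
  rw [dst_pair_snd p X Z z]
  exact Finset.single_le_sum (fun a' _ => dst_nonneg hp (fun ω => (X ω, Z ω)) (a', z))
    (Finset.mem_univ a)

lemma ent_pair_decomp {p : Ω → ℝ} (hp : ∀ ω, 0 ≤ p ω) (X : Ω → α) (Z : Ω → γ) :
    ent p (fun ω => (X ω, Z ω)) = ent p Z + ∑ z, dst p Z z * ent (cnd p Z z) X := by
  have key : ∀ z, dst p Z z * ent (cnd p Z z) X
      = (∑ a, dst p (fun ω => (X ω, Z ω)) (a, z) * Real.logb 2 (dst p Z z))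
        - ∑ a, dst p (fun ω => (X ω, Z ω)) (a, z) *
            Real.logb 2 (dst p (fun ω => (X ω, Z ω)) (a, z)) := by
    intro z
    rw [ent_eq, mul_neg, Finset.mul_sum, ← Finset.sum_sub_distrib, ← Finset.sum_neg_distrib]
    refine Finset.sum_congr rfl fun a _ => ?_
    rw [dst_cnd]
    set P := dst p (fun ω => (X ω, Z ω)) (a, z) with hP
    set dz := dst p Z z with hdz
    rcases eq_or_ne dz 0 with h | h
    · have hP0 : P = 0 := le_antisymm (h ▸ dst_pair_le hp X Z a z) (dst_nonneg hp _ _)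
      simp [h, hP0]
    rcases eq_or_ne P 0 with hP0 | hP0
    · simp [hP0, zero_div]
    · rw [Real.logb_div hP0 h]
      field_simp
      ring
  have h1 : ∀ z, ∑ a, dst p (fun ω => (X ω, Z ω)) (a, z) * Real.logb 2 (dst p Z z)
      = dst p Z z * Real.logb 2 (dst p Z z) := by
    intro z
    rw [← Finset.sum_mul, ← dst_pair_snd p X Z z]
  have hL : ent p (fun ω => (X ω, Z ω))
      = -∑ z, ∑ a, dst p (fun ω => (X ω, Z ω)) (a, z) *
          Real.logb 2 (dst p (fun ω => (X ω, Z ω)) (a, z)) := by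
    rw [ent_eq, Fintype.sum_prod_type, Finset.sum_comm]
  simp only [key, Finset.sum_sub_distrib, h1]
  rw [hL, ent_eq]
  ring

lemma condMutInf_decomp {p : Ω → ℝ} (hp : ∀ ω, 0 ≤ p ω) (X : Ω → α) (Y : Ω → β) (Z : Ω → γ) :
    condMutInf p X Y Z = ∑ z, dst p Z z * mutInf (cnd p Z z) X Y := by
  have e3 : ent p (fun ω => (X ω, Y ω, Z ω)) = ent p (fun ω => ((X ω, Y ω), Z ω)) :=
    (ent_comp' p (fun ω => ((X ω, Y ω), Z ω)) (fun ω => (X ω, Y ω, Z ω))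
      (e := fun x : (α × β) × γ => (x.1.1, x.1.2, x.2))
      (fun x y h => by
        obtain ⟨⟨x1, x2⟩, x3⟩ := x; obtain ⟨⟨y1, y2⟩, y3⟩ := y
        simp_all [Prod.ext_iff]) (fun ω => rfl))
  unfold condMutInf mutInf
  rw [e3, ent_pair_decomp hp X Z, ent_pair_decomp hp Y Z,
    ent_pair_decomp hp (fun ω => (X ω, Y ω)) Z]
  have hs : ∑ z, dst p Z z * (ent (cnd p Z z) X + ent (cnd p Z z) Y
      - ent (cnd p Z z) (fun ω => (X ω, Y ω)))
      = (∑ z, dst p Z z * ent (cnd p Z z) X) + (∑ z, dst p Z z * ent (cnd p Z z) Y)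
        - ∑ z, dst p Z z * ent (cnd p Z z) (fun ω => (X ω, Y ω)) := by
    rw [← Finset.sum_add_distrib, ← Finset.sum_sub_distrib]
    exact Finset.sum_congr rfl fun z _ => by ring
  rw [hs]
  ring
end auxdst

section star
variable {𝒳 𝒴s 𝒴c M 𝒲 : Type*} [Fintype 𝒳] [DecidableEq 𝒳]
  [Fintype 𝒴s] [DecidableEq 𝒴s] [Fintype 𝒴c] [DecidableEq 𝒴c]
  [Fintype M] [DecidableEq M] [Fintype 𝒲] [DecidableEq 𝒲]
  {n : ℕ}

lemma star_factor (q : 𝒳 → 𝒴s → 𝒴c → ℝ)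
    (hq1 : ∀ x, ∑ ys : 𝒴s, ∑ yc : 𝒴c, q x ys yc = 1)
    (ν : M → (Fin n → 𝒳) → ℝ) (k : Fin n)
    (W : (M × (Fin n → 𝒳) × (Fin n → 𝒴s) × (Fin n → 𝒴c)) → 𝒲)
    (hW : ∀ (m : M) (xv : Fin n → 𝒳) (ysv ysv' : Fin n → 𝒴s) (ycv ycv' : Fin n → 𝒴c),
      (∀ t, t ≠ k → ysv t = ysv' t) → (∀ t, t ≠ k → ycv t = ycv' t) →
      W (m, xv, ysv, ycv) = W (m, xv, ysv', ycv'))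
    (w : 𝒲) (x : 𝒳) (ys : 𝒴s) (yc : 𝒴c) :
    dst (fun ω : M × (Fin n → 𝒳) × (Fin n → 𝒴s) × (Fin n → 𝒴c) =>
        ν ω.1 ω.2.1 * ∏ t, q (ω.2.1 t) (ω.2.2.1 t) (ω.2.2.2 t))
      (fun ω => (W ω, ω.2.1 k, ω.2.2.1 k, ω.2.2.2 k)) (w, x, ys, yc)
      = dst (fun ω : M × (Fin n → 𝒳) × (Fin n → 𝒴s) × (Fin n → 𝒴c) =>
          ν ω.1 ω.2.1 * ∏ t, q (ω.2.1 t) (ω.2.2.1 t) (ω.2.2.2 t))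
        (fun ω => (W ω, ω.2.1 k)) (w, x) * q x ys yc := by
  set p : (M × (Fin n → 𝒳) × (Fin n → 𝒴s) × (Fin n → 𝒴c)) → ℝ := fun ω => ν ω.1 ω.2.1 * ∏ t, q (ω.2.1 t) (ω.2.2.1 t) (ω.2.2.2 t) with hp
  -- the reduced kernel
  set N : 𝒴s → 𝒴c → ℝ := fun a b => ∑ ω : M × (Fin n → 𝒳) × (Fin n → 𝒴s) × (Fin n → 𝒴c),
      if W ω = w ∧ ω.2.1 k = x ∧ ω.2.2.1 k = a ∧ ω.2.2.2 k = b then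
        ν ω.1 ω.2.1 * ∏ t ∈ univ.erase k, q (ω.2.1 t) (ω.2.2.1 t) (ω.2.2.2 t)
      else 0 with hN
  -- step 1 : dst of the quadruple = q * N
  have step1 : ∀ (a : 𝒴s) (b : 𝒴c),
      dst p (fun ω => (W ω, ω.2.1 k, ω.2.2.1 k, ω.2.2.2 k)) (w, x, a, b)
        = q x a b * N a b := by
    intro a b
    rw [dst_eq, hN, Finset.mul_sum]
    refine Finset.sum_congr rfl fun ω _ => ?_
    by_cases h : W ω = w ∧ ω.2.1 k = x ∧ ω.2.2.1 k = a ∧ ω.2.2.2 k = b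
    · obtain ⟨h1, h2, h3, h4⟩ := h
      rw [if_pos (by simp [Prod.ext_iff, h1, h2, h3, h4]), if_pos ⟨h1, h2, h3, h4⟩]
      simp only [hp]
      rw [← Finset.mul_prod_erase univ _ (Finset.mem_univ k), h2, h3, h4]
      ring
    · rw [if_neg (by simpa [Prod.ext_iff] using h), if_neg h, mul_zero]
  -- step 2 : N is constant
  have step2 : ∀ (a : 𝒴s) (b : 𝒴c), N a b = N ys yc := by
    intro a b
    simp only [hN]
    set σs := Equiv.swap a ys with hσs
    set σc := Equiv.swap b yc with hσc
    set Φ : (M × (Fin n → 𝒳) × (Fin n → 𝒴s) × (Fin n → 𝒴c)) → (M × (Fin n → 𝒳) × (Fin n → 𝒴s) × (Fin n → 𝒴c)) := fun ω =>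
      (ω.1, ω.2.1, Function.update ω.2.2.1 k (σs (ω.2.2.1 k)),
        Function.update ω.2.2.2 k (σc (ω.2.2.2 k))) with hΦ
    have hinv : Function.Involutive Φ := by
      intro ω
      simp only [hΦ, Function.update_self]
      refine Prod.ext rfl (Prod.ext rfl (Prod.ext ?_ ?_)) <;>
        · funext t
          by_cases ht : t = k
          · subst ht; simp [hσs, hσc, Equiv.swap_apply_self]
          · simp [Function.update_of_ne ht]
    have hbij : Function.Bijective Φ := hinv.bijective
    rw [← Function.Bijective.sum_comp hbij]
    refine Finset.sum_congr rfl fun ω _ => ?_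
    have hWΦ : W (Φ ω) = W ω :=
      hW ω.1 ω.2.1 _ ω.2.2.1 _ ω.2.2.2 (fun t ht => Function.update_of_ne ht _ _)
        (fun t ht => Function.update_of_ne ht _ _)
    have hprodΦ : ∏ t ∈ univ.erase k, q ((Φ ω).2.1 t) ((Φ ω).2.2.1 t) ((Φ ω).2.2.2 t)
        = ∏ t ∈ univ.erase k, q (ω.2.1 t) (ω.2.2.1 t) (ω.2.2.2 t) := by
      refine Finset.prod_congr rfl fun t ht => ?_
      have ht' : t ≠ k := (Finset.mem_erase.1 ht).1
      simp [hΦ, Function.update_of_ne ht']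
    have hs : ∀ v : 𝒴s, σs v = a ↔ v = ys := by
      intro v
      rw [hσs]
      constructor
      · intro h
        have := congrArg (Equiv.swap a ys).symm h
        simpa [Equiv.swap_apply_left] using this
      · rintro rfl; exact Equiv.swap_apply_right _ _
    have hc : ∀ v : 𝒴c, σc v = b ↔ v = yc := by
      intro v
      rw [hσc]
      constructor
      · intro h
        have := congrArg (Equiv.swap b yc).symm h
        simpa [Equiv.swap_apply_left] using this
      · rintro rfl; exact Equiv.swap_apply_right _ _
    have hcond : (W (Φ ω) = w ∧ (Φ ω).2.1 k = x ∧ (Φ ω).2.2.1 k = a ∧ (Φ ω).2.2.2 k = b)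
        ↔ (W ω = w ∧ ω.2.1 k = x ∧ ω.2.2.1 k = ys ∧ ω.2.2.2 k = yc) := by
      rw [hWΦ]
      simp only [hΦ, Function.update_self, hs, hc]
    by_cases h : W ω = w ∧ ω.2.1 k = x ∧ ω.2.2.1 k = ys ∧ ω.2.2.2 k = yc
    · rw [if_pos (hcond.2 h), if_pos h, hprodΦ]
    · rw [if_neg (fun hc' => h (hcond.1 hc')), if_neg h]
  -- step 3 : marginal
  have step3 : dst p (fun ω => (W ω, ω.2.1 k)) (w, x) = N ys yc := by
    rw [dst_quad_marg p W (fun ω => ω.2.1 k) (fun ω => ω.2.2.1 k) (fun ω => ω.2.2.2 k) w x]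
    have : ∀ cd : 𝒴s × 𝒴c,
        dst p (fun ω => (W ω, ω.2.1 k, ω.2.2.1 k, ω.2.2.2 k)) (w, x, cd.1, cd.2)
          = q x cd.1 cd.2 * N ys yc := by
      intro cd; rw [step1, step2]
    rw [Finset.sum_congr rfl fun cd _ => this cd, ← Finset.sum_mul]
    rw [show (∑ cd : 𝒴s × 𝒴c, q x cd.1 cd.2) = 1 from by
      rw [Fintype.sum_prod_type]; exact hq1 x]
    rw [one_mul]
  rw [step1, step2, step3]
  ring
end star


section main17
variable {𝒳 𝒴s 𝒴c M : Type*} [Fintype 𝒳] [DecidableEq 𝒳]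
  [Fintype 𝒴s] [DecidableEq 𝒴s] [Fintype 𝒴c] [DecidableEq 𝒴c]
  [Fintype M] [DecidableEq M] {n : ℕ}

/-- hybrid first-`k`-coordinates-from-`Y_s` variable -/
def hybF (i : Fin n) (k : ℕ)
    (ω : M × (Fin n → 𝒳) × (Fin n → 𝒴s) × (Fin n → 𝒴c)) (t : Fin (i : ℕ)) : 𝒴s ⊕ 𝒴c :=
  if (t : ℕ) < k then Sum.inl (ω.2.2.1 ⟨(t : ℕ), Nat.lt_trans t.isLt i.isLt⟩)
  else Sum.inr (ω.2.2.2 ⟨(t : ℕ), Nat.lt_trans t.isLt i.isLt⟩)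

lemma step17 (q : 𝒳 → 𝒴s → 𝒴c → ℝ)
    (hq0 : ∀ x ys yc, 0 ≤ q x ys yc)
    (hq1 : ∀ x, ∑ ys : 𝒴s, ∑ yc : 𝒴c, q x ys yc = 1)
    (hln : ∀ (m : ℕ) (μ : Fin m → 𝒳 → ℝ),
      (∀ u x, 0 ≤ μ u x) → (∑ u : Fin m, ∑ x : 𝒳, μ u x = 1) →
      mutInf (fun ω : Fin m × 𝒳 × 𝒴s × 𝒴c => μ ω.1 ω.2.1 * q ω.2.1 ω.2.2.1 ω.2.2.2)
          (fun ω => ω.1) (fun ω => ω.2.2.2) ≤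
        mutInf (fun ω : Fin m × 𝒳 × 𝒴s × 𝒴c => μ ω.1 ω.2.1 * q ω.2.1 ω.2.2.1 ω.2.2.2)
          (fun ω => ω.1) (fun ω => ω.2.2.1))
    (ν : M → (Fin n → 𝒳) → ℝ) (hν0 : ∀ msg x, 0 ≤ ν msg x)
    (i : Fin n) (k : ℕ) (hk : k < (i : ℕ)) :
    condMutInf (fun ω : M × (Fin n → 𝒳) × (Fin n → 𝒴s) × (Fin n → 𝒴c) =>
        ν ω.1 ω.2.1 * ∏ t, q (ω.2.1 t) (ω.2.2.1 t) (ω.2.2.2 t))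
      (hybF i k) (fun ω => ω.2.2.2 i) (fun ω => ω.1)
    ≤ condMutInf (fun ω : M × (Fin n → 𝒳) × (Fin n → 𝒴s) × (Fin n → 𝒴c) =>
        ν ω.1 ω.2.1 * ∏ t, q (ω.2.1 t) (ω.2.2.1 t) (ω.2.2.2 t))
      (hybF i (k+1)) (fun ω => ω.2.2.2 i) (fun ω => ω.1) := by
  set p : (M × (Fin n → 𝒳) × (Fin n → 𝒴s) × (Fin n → 𝒴c)) → ℝ :=
    fun ω => ν ω.1 ω.2.1 * ∏ t, q (ω.2.1 t) (ω.2.2.1 t) (ω.2.2.2 t) with hpdef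
  have hp : ∀ ω, 0 ≤ p ω := fun ω =>
    mul_nonneg (hν0 _ _) (Finset.prod_nonneg fun t _ => hq0 _ _ _)
  set kf : Fin (i : ℕ) := ⟨k, hk⟩ with hkf
  set kn : Fin n := ⟨k, Nat.lt_trans hk i.isLt⟩ with hkn
  set Wf : (M × (Fin n → 𝒳) × (Fin n → 𝒴s) × (Fin n → 𝒴c)) →
      ({t : Fin (i : ℕ) // t ≠ kf} → 𝒴s ⊕ 𝒴c) := fun ω t =>
    if ((t.1 : Fin (i : ℕ)) : ℕ) < k then
      Sum.inl (ω.2.2.1 ⟨(t.1 : ℕ), Nat.lt_trans t.1.isLt i.isLt⟩)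
    else Sum.inr (ω.2.2.2 ⟨(t.1 : ℕ), Nat.lt_trans t.1.isLt i.isLt⟩) with hWfdef
  -- recodings of the two hybrids
  have hadapt : ∀ (t : {t : Fin (i : ℕ) // t ≠ kf}), (t.1 : ℕ) ≠ k := by
    intro t ht
    exact t.2 (Fin.ext ht)
  have he_s : Function.Injective (fun ag : 𝒴s × ({t : Fin (i : ℕ) // t ≠ kf} → 𝒴s ⊕ 𝒴c) =>
      (fun t : Fin (i : ℕ) => if h : t = kf then Sum.inl ag.1 else ag.2 ⟨t, h⟩)) := by
    rintro ⟨a, g⟩ ⟨a', g'⟩ h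
    simp only [Prod.mk.injEq]
    constructor
    · have := congrFun h kf
      simpa using this
    · funext t
      have := congrFun h t.1
      dsimp only at this
      rw [dif_neg t.2, dif_neg t.2] at this
      exact this
  have he_c : Function.Injective (fun ag : 𝒴c × ({t : Fin (i : ℕ) // t ≠ kf} → 𝒴s ⊕ 𝒴c) =>
      (fun t : Fin (i : ℕ) => if h : t = kf then Sum.inr ag.1 else ag.2 ⟨t, h⟩)) := by
    rintro ⟨a, g⟩ ⟨a', g'⟩ h
    simp only [Prod.mk.injEq]
    constructor
    · have := congrFun h kf
      simpa using this
    · funext t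
      have := congrFun h t.1
      dsimp only at this
      rw [dif_neg t.2, dif_neg t.2] at this
      exact this
  have heq_s : (hybF i (k+1) : (M × (Fin n → 𝒳) × (Fin n → 𝒴s) × (Fin n → 𝒴c)) → _)
      = fun ω => (fun ag : 𝒴s × ({t : Fin (i : ℕ) // t ≠ kf} → 𝒴s ⊕ 𝒴c) =>
          (fun t : Fin (i : ℕ) => if h : t = kf then Sum.inl ag.1 else ag.2 ⟨t, h⟩))
        (ω.2.2.1 kn, Wf ω) := by
    funext ω t
    by_cases h : t = kf
    · subst h
      simp [hybF, hkf, hkn, Nat.lt_succ_self]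
    · dsimp only
      rw [dif_neg h]
      have hne : (t : ℕ) ≠ k := hadapt ⟨t, h⟩
      by_cases hlt : (t : ℕ) < k
      · rw [show hybF i (k+1) ω t = Sum.inl (ω.2.2.1 ⟨(t : ℕ), Nat.lt_trans t.isLt i.isLt⟩)
          from if_pos (Nat.lt_succ_of_lt hlt)]
        rw [hWfdef]
        dsimp only
        rw [if_pos hlt]
      · rw [show hybF i (k+1) ω t = Sum.inr (ω.2.2.2 ⟨(t : ℕ), Nat.lt_trans t.isLt i.isLt⟩)
          from if_neg (by omega)]
        rw [hWfdef]
        dsimp only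
        rw [if_neg hlt]
  have heq_c : (hybF i k : (M × (Fin n → 𝒳) × (Fin n → 𝒴s) × (Fin n → 𝒴c)) → _)
      = fun ω => (fun ag : 𝒴c × ({t : Fin (i : ℕ) // t ≠ kf} → 𝒴s ⊕ 𝒴c) =>
          (fun t : Fin (i : ℕ) => if h : t = kf then Sum.inr ag.1 else ag.2 ⟨t, h⟩))
        (ω.2.2.2 kn, Wf ω) := by
    funext ω t
    by_cases h : t = kf
    · subst h
      simp [hybF, hkf, hkn]
    · dsimp only
      rw [dif_neg h]
      have hne : (t : ℕ) ≠ k := hadapt ⟨t, h⟩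
      by_cases hlt : (t : ℕ) < k
      · rw [show hybF i k ω t = Sum.inl (ω.2.2.1 ⟨(t : ℕ), Nat.lt_trans t.isLt i.isLt⟩)
          from if_pos hlt]
        rw [hWfdef]
        dsimp only
        rw [if_pos hlt]
      · rw [show hybF i k ω t = Sum.inr (ω.2.2.2 ⟨(t : ℕ), Nat.lt_trans t.isLt i.isLt⟩)
          from if_neg hlt]
        rw [hWfdef]
        dsimp only
        rw [if_neg hlt]
  -- chain rule on both sides
  have hTs : condMutInf p (hybF i (k+1)) (fun ω => ω.2.2.2 i) (fun ω => ω.1)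
      = condMutInf p Wf (fun ω => ω.2.2.2 i) (fun ω => ω.1)
        + condMutInf p (fun ω => ω.2.2.1 kn) (fun ω => ω.2.2.2 i)
            (fun ω => (Wf ω, ω.1)) := by
    rw [heq_s]
    rw [condMutInf_comp₁ p (fun ω => (ω.2.2.1 kn, Wf ω)) (fun ω => ω.2.2.2 i)
      (fun ω => ω.1) he_s]
    exact condMutInf_chain p (fun ω => ω.2.2.1 kn) Wf (fun ω => ω.2.2.2 i) (fun ω => ω.1)
  have hTc : condMutInf p (hybF i k) (fun ω => ω.2.2.2 i) (fun ω => ω.1)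
      = condMutInf p Wf (fun ω => ω.2.2.2 i) (fun ω => ω.1)
        + condMutInf p (fun ω => ω.2.2.2 kn) (fun ω => ω.2.2.2 i)
            (fun ω => (Wf ω, ω.1)) := by
    rw [heq_c]
    rw [condMutInf_comp₁ p (fun ω => (ω.2.2.2 kn, Wf ω)) (fun ω => ω.2.2.2 i)
      (fun ω => ω.1) he_c]
    exact condMutInf_chain p (fun ω => ω.2.2.2 kn) Wf (fun ω => ω.2.2.2 i) (fun ω => ω.1)
  rw [hTs, hTc]
  refine add_le_add (le_refl _) ?_
  -- now the conditional less-noisy comparison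
  set Z : (M × (Fin n → 𝒳) × (Fin n → 𝒴s) × (Fin n → 𝒴c)) →
      (({t : Fin (i : ℕ) // t ≠ kf} → 𝒴s ⊕ 𝒴c) × M) := fun ω => (Wf ω, ω.1) with hZdef
  rw [condMutInf_decomp hp (fun ω => ω.2.2.2 kn) (fun ω => ω.2.2.2 i) Z,
    condMutInf_decomp hp (fun ω => ω.2.2.1 kn) (fun ω => ω.2.2.2 i) Z]
  refine Finset.sum_le_sum fun z _ => ?_
  rcases eq_or_ne (dst p Z z) 0 with hz | hz
  · rw [hz, zero_mul, zero_mul]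
  refine mul_le_mul_of_nonneg_left ?_ (dst_nonneg hp Z z)
  -- set up the single–letter channel instance
  set m := Fintype.card 𝒴c with hm
  set ec : 𝒴c ≃ Fin m := Fintype.equivFin 𝒴c with hec
  set μ : Fin m → 𝒳 → ℝ := fun u x =>
    dst (cnd p Z z) (fun ω => (ec (ω.2.2.2 i), ω.2.1 kn)) (u, x) with hμdef
  have hμ0 : ∀ u x, 0 ≤ μ u x := fun u x =>
    dst_nonneg (cnd_nonneg hp Z z) _ _
  have hμ1 : ∑ u : Fin m, ∑ x : 𝒳, μ u x = 1 := by
    rw [← Fintype.sum_prod_type]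
    rw [show (∑ ux : Fin m × 𝒳, μ ux.1 ux.2)
      = ∑ ux : Fin m × 𝒳, dst (cnd p Z z) (fun ω => (ec (ω.2.2.2 i), ω.2.1 kn)) ux from
      Finset.sum_congr rfl fun ux _ => rfl]
    rw [sum_dst, sum_cnd Z z hz]
  -- insensitivity of the conditioning data to coordinate kn of the outputs
  have hWins : ∀ (m0 : M) (xv : Fin n → 𝒳) (ysv ysv' : Fin n → 𝒴s) (ycv ycv' : Fin n → 𝒴c),
      (∀ t, t ≠ kn → ysv t = ysv' t) → (∀ t, t ≠ kn → ycv t = ycv' t) →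
      (fun ω : M × (Fin n → 𝒳) × (Fin n → 𝒴s) × (Fin n → 𝒴c) =>
          ((ec (ω.2.2.2 i), Z ω))) (m0, xv, ysv, ycv)
        = (fun ω => ((ec (ω.2.2.2 i), Z ω))) (m0, xv, ysv', ycv') := by
    intro m0 xv ysv ysv' ycv ycv' hys hyc
    have hik : i ≠ kn := by
      intro h
      have : (i : ℕ) = k := by rw [h, hkn]
      omega
    simp only [hZdef, hWfdef]
    refine Prod.ext ?_ (Prod.ext ?_ rfl)
    · simp [hyc i hik]
    · funext t
      have htk : (⟨(t.1 : ℕ), Nat.lt_trans t.1.isLt i.isLt⟩ : Fin n) ≠ kn := by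
        intro h
        apply hadapt t
        have : ((⟨(t.1 : ℕ), Nat.lt_trans t.1.isLt i.isLt⟩ : Fin n) : ℕ) = (kn : ℕ) := by
          rw [h]
        simpa [hkn] using this
      simp only [hys _ htk, hyc _ htk]
  -- the factorization through the channel
  have hstar := star_factor q hq1 ν kn
    (fun ω : M × (Fin n → 𝒳) × (Fin n → 𝒴s) × (Fin n → 𝒴c) => ((ec (ω.2.2.2 i), Z ω)))
    hWins
  -- key joint-distribution identity
  have key4 : ∀ (u : Fin m) (x : 𝒳) (ys : 𝒴s) (yc : 𝒴c),
      dst (cnd p Z z) (fun ω => (ec (ω.2.2.2 i), ω.2.1 kn, ω.2.2.1 kn, ω.2.2.2 kn))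
          (u, x, ys, yc)
        = μ u x * q x ys yc := by
    intro u x ys yc
    have hσ : Function.Injective
        (fun v : (Fin m × 𝒳 × 𝒴s × 𝒴c) × ((({t : Fin (i : ℕ) // t ≠ kf} → 𝒴s ⊕ 𝒴c) × M)) =>
          (((v.1.1, v.2), v.1.2.1, v.1.2.2.1, v.1.2.2.2) :
            (Fin m × (({t : Fin (i : ℕ) // t ≠ kf} → 𝒴s ⊕ 𝒴c) × M)) × 𝒳 × 𝒴s × 𝒴c)) := by
      rintro ⟨⟨u1, x1, s1, c1⟩, z1⟩ ⟨⟨u2, x2, s2, c2⟩, z2⟩ h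
      simp_all [Prod.ext_iff]
    have h1 : dst p (fun ω => ((fun ω => (ec (ω.2.2.2 i), ω.2.1 kn, ω.2.2.1 kn, ω.2.2.2 kn)) ω,
          Z ω)) ((u, x, ys, yc), z)
        = dst p (fun ω => (((ec (ω.2.2.2 i), Z ω) :
              Fin m × (({t : Fin (i : ℕ) // t ≠ kf} → 𝒴s ⊕ 𝒴c) × M)),
            ω.2.1 kn, ω.2.2.1 kn, ω.2.2.2 kn)) ((u, z), x, ys, yc) :=
      (dst_comp_inj p (fun ω => ((ec (ω.2.2.2 i), ω.2.1 kn, ω.2.2.1 kn, ω.2.2.2 kn), Z ω))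
        hσ ((u, x, ys, yc), z)).symm
    have hσ2 : Function.Injective
        (fun v : (Fin m × 𝒳) × ((({t : Fin (i : ℕ) // t ≠ kf} → 𝒴s ⊕ 𝒴c) × M)) =>
          (((v.1.1, v.2), v.1.2) :
            (Fin m × (({t : Fin (i : ℕ) // t ≠ kf} → 𝒴s ⊕ 𝒴c) × M)) × 𝒳)) := by
      rintro ⟨⟨u1, x1⟩, z1⟩ ⟨⟨u2, x2⟩, z2⟩ h
      simp_all [Prod.ext_iff]
    have h2 : dst p (fun ω => ((fun ω => (ec (ω.2.2.2 i), ω.2.1 kn)) ω, Z ω)) ((u, x), z)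
        = dst p (fun ω => (((ec (ω.2.2.2 i), Z ω) :
              Fin m × (({t : Fin (i : ℕ) // t ≠ kf} → 𝒴s ⊕ 𝒴c) × M)), ω.2.1 kn)) ((u, z), x) :=
      (dst_comp_inj p (fun ω => ((ec (ω.2.2.2 i), ω.2.1 kn), Z ω)) hσ2 ((u, x), z)).symm
    rw [dst_cnd p Z z _ (u, x, ys, yc), h1, hstar ((u, z)) x ys yc, hμdef]
    simp only
    rw [dst_cnd p Z z _ (u, x), h2]
    rw [div_mul_eq_mul_div]
  -- joint laws of (U, Y_c) and (U, Y_s) match the single-letter space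
  set P' : (Fin m × 𝒳 × 𝒴s × 𝒴c) → ℝ :=
    fun ω => μ ω.1 ω.2.1 * q ω.2.1 ω.2.2.1 ω.2.2.2 with hP'def
  have hjc : ∀ (u : Fin m) (yc : 𝒴c),
      dst (cnd p Z z) (fun ω => (ec (ω.2.2.2 i), ω.2.2.2 kn)) (u, yc)
        = dst P' (fun ω' => (ω'.1, ω'.2.2.2)) (u, yc) := by
    intro u yc
    rw [dst_marg14 (cnd p Z z) (fun ω => ec (ω.2.2.2 i)) (fun ω => ω.2.1 kn)
      (fun ω => ω.2.2.1 kn) (fun ω => ω.2.2.2 kn) u yc]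
    rw [dst_marg14 P' (fun ω' => ω'.1) (fun ω' => ω'.2.1) (fun ω' => ω'.2.2.1)
      (fun ω' => ω'.2.2.2) u yc]
    refine Finset.sum_congr rfl fun bc _ => ?_
    rw [key4 u bc.1 bc.2 yc]
    have : (fun ω' : Fin m × 𝒳 × 𝒴s × 𝒴c => (ω'.1, ω'.2.1, ω'.2.2.1, ω'.2.2.2))
        = (id : Fin m × 𝒳 × 𝒴s × 𝒴c → Fin m × 𝒳 × 𝒴s × 𝒴c) := rfl
    rw [this, dst_id]
  have hjs : ∀ (u : Fin m) (ys : 𝒴s),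
      dst (cnd p Z z) (fun ω => (ec (ω.2.2.2 i), ω.2.2.1 kn)) (u, ys)
        = dst P' (fun ω' => (ω'.1, ω'.2.2.1)) (u, ys) := by
    intro u ys
    rw [dst_marg13 (cnd p Z z) (fun ω => ec (ω.2.2.2 i)) (fun ω => ω.2.1 kn)
      (fun ω => ω.2.2.1 kn) (fun ω => ω.2.2.2 kn) u ys]
    rw [dst_marg13 P' (fun ω' => ω'.1) (fun ω' => ω'.2.1) (fun ω' => ω'.2.2.1)
      (fun ω' => ω'.2.2.2) u ys]
    refine Finset.sum_congr rfl fun bd _ => ?_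
    rw [key4 u bd.1 ys bd.2]
    have : (fun ω' : Fin m × 𝒳 × 𝒴s × 𝒴c => (ω'.1, ω'.2.1, ω'.2.2.1, ω'.2.2.2))
        = (id : Fin m × 𝒳 × 𝒴s × 𝒴c → Fin m × 𝒳 × 𝒴s × 𝒴c) := rfl
    rw [this, dst_id]
  -- put it all together
  have hc : mutInf (cnd p Z z) (fun ω => ω.2.2.2 kn) (fun ω => ω.2.2.2 i)
      = mutInf P' (fun ω' => ω'.1) (fun ω' => ω'.2.2.2) := by
    rw [mutInf_comm (cnd p Z z) (fun ω => ω.2.2.2 kn) (fun ω => ω.2.2.2 i)]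
    rw [← mutInf_comp₁ (cnd p Z z) (fun ω => ω.2.2.2 i) (fun ω => ω.2.2.2 kn)
      (e := fun yc => ec yc) ec.injective]
    exact mutInf_congr hjc
  have hs : mutInf (cnd p Z z) (fun ω => ω.2.2.1 kn) (fun ω => ω.2.2.2 i)
      = mutInf P' (fun ω' => ω'.1) (fun ω' => ω'.2.2.1) := by
    rw [mutInf_comm (cnd p Z z) (fun ω => ω.2.2.1 kn) (fun ω => ω.2.2.2 i)]
    rw [← mutInf_comp₁ (cnd p Z z) (fun ω => ω.2.2.2 i) (fun ω => ω.2.2.1 kn)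
      (e := fun yc => ec yc) ec.injective]
    exact mutInf_congr hjs
  rw [hc, hs]
  exact hln m μ hμ0 hμ1
end main17

/-- Let `q` be a discrete memoryless broadcast channel
`p(y_s, y_c | x)` with receiver `Y_s` less noisy than `Y_c` (Körner–Marton:
`I(U;Y_s) ≥ I(U;Y_c)` for every auxiliary `U` and every joint law `p(u,x)`,
the outputs being generated from `X` through `q`).  For the channel used `n`
times without feedback with any message random variable `M` jointly distributed
with `X^n` (so `M ⊸ X^n ⊸ (Y_s^n, Y_c^n)`), one has for every `1 ≤ i ≤ n`:
`I(Y_s^{i-1}; Y_{c,i} | M) ≥ I(Y_c^{i-1}; Y_{c,i} | M)`. -/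
theorem stmt_17
    (𝒳 𝒴s 𝒴c : Type) [Fintype 𝒳] [DecidableEq 𝒳]
    [Fintype 𝒴s] [DecidableEq 𝒴s] [Fintype 𝒴c] [DecidableEq 𝒴c]
    (q : 𝒳 → 𝒴s → 𝒴c → ℝ)
    (hq0 : ∀ x ys yc, 0 ≤ q x ys yc)
    (hq1 : ∀ x, ∑ ys : 𝒴s, ∑ yc : 𝒴c, q x ys yc = 1)
    (hln : ∀ (m : ℕ) (μ : Fin m → 𝒳 → ℝ),
      (∀ u x, 0 ≤ μ u x) → (∑ u : Fin m, ∑ x : 𝒳, μ u x = 1) →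
      mutInf (fun ω : Fin m × 𝒳 × 𝒴s × 𝒴c => μ ω.1 ω.2.1 * q ω.2.1 ω.2.2.1 ω.2.2.2)
          (fun ω => ω.1) (fun ω => ω.2.2.2) ≤
        mutInf (fun ω : Fin m × 𝒳 × 𝒴s × 𝒴c => μ ω.1 ω.2.1 * q ω.2.1 ω.2.2.1 ω.2.2.2)
          (fun ω => ω.1) (fun ω => ω.2.2.1))
    (n : ℕ) (M : Type) [Fintype M] [DecidableEq M]
    (ν : M → (Fin n → 𝒳) → ℝ)
    (hν0 : ∀ msg x, 0 ≤ ν msg x) (hν1 : ∑ msg : M, ∑ x : Fin n → 𝒳, ν msg x = 1)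
    (i : Fin n) :
    condMutInf
        (fun ω : M × (Fin n → 𝒳) × (Fin n → 𝒴s) × (Fin n → 𝒴c) =>
          ν ω.1 ω.2.1 * ∏ t, q (ω.2.1 t) (ω.2.2.1 t) (ω.2.2.2 t))
        (fun ω => fun t : Fin (i : ℕ) => ω.2.2.2 ⟨(t : ℕ), Nat.lt_trans t.isLt i.isLt⟩)
        (fun ω => ω.2.2.2 i)
        (fun ω => ω.1) ≤
      condMutInf
        (fun ω : M × (Fin n → 𝒳) × (Fin n → 𝒴s) × (Fin n → 𝒴c) =>
          ν ω.1 ω.2.1 * ∏ t, q (ω.2.1 t) (ω.2.2.1 t) (ω.2.2.2 t))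
        (fun ω => fun t : Fin (i : ℕ) => ω.2.2.1 ⟨(t : ℕ), Nat.lt_trans t.isLt i.isLt⟩)
        (fun ω => ω.2.2.2 i)
        (fun ω => ω.1) := by
  set p : (M × (Fin n → 𝒳) × (Fin n → 𝒴s) × (Fin n → 𝒴c)) → ℝ :=
    fun ω => ν ω.1 ω.2.1 * ∏ t, q (ω.2.1 t) (ω.2.2.1 t) (ω.2.2.2 t) with hpdef
  have h0 : condMutInf p
      (fun ω : M × (Fin n → 𝒳) × (Fin n → 𝒴s) × (Fin n → 𝒴c) =>
        fun t : Fin (i : ℕ) => ω.2.2.2 ⟨(t : ℕ), Nat.lt_trans t.isLt i.isLt⟩)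
      (fun ω => ω.2.2.2 i) (fun ω => ω.1)
      = condMutInf p (hybF i 0) (fun ω => ω.2.2.2 i) (fun ω => ω.1) := by
    have he : Function.Injective (fun f : Fin (i : ℕ) → 𝒴c =>
        (fun t => Sum.inr (f t) : Fin (i : ℕ) → 𝒴s ⊕ 𝒴c)) := by
      intro f g h
      funext t
      exact Sum.inr.inj (congrFun h t)
    have heq : (hybF i 0 : (M × (Fin n → 𝒳) × (Fin n → 𝒴s) × (Fin n → 𝒴c)) → _)
        = fun ω => (fun f : Fin (i : ℕ) → 𝒴c =>
            (fun t => Sum.inr (f t) : Fin (i : ℕ) → 𝒴s ⊕ 𝒴c))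
          ((fun ω : M × (Fin n → 𝒳) × (Fin n → 𝒴s) × (Fin n → 𝒴c) =>
            fun t : Fin (i : ℕ) => ω.2.2.2 ⟨(t : ℕ), Nat.lt_trans t.isLt i.isLt⟩) ω) := by
      funext ω t
      simp [hybF]
    rw [heq, condMutInf_comp₁ p _ (fun ω => ω.2.2.2 i) (fun ω => ω.1) he]
  have hn : condMutInf p
      (fun ω : M × (Fin n → 𝒳) × (Fin n → 𝒴s) × (Fin n → 𝒴c) =>
        fun t : Fin (i : ℕ) => ω.2.2.1 ⟨(t : ℕ), Nat.lt_trans t.isLt i.isLt⟩)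
      (fun ω => ω.2.2.2 i) (fun ω => ω.1)
      = condMutInf p (hybF i (i : ℕ)) (fun ω => ω.2.2.2 i) (fun ω => ω.1) := by
    have he : Function.Injective (fun f : Fin (i : ℕ) → 𝒴s =>
        (fun t => Sum.inl (f t) : Fin (i : ℕ) → 𝒴s ⊕ 𝒴c)) := by
      intro f g h
      funext t
      exact Sum.inl.inj (congrFun h t)
    have heq : (hybF i (i : ℕ) : (M × (Fin n → 𝒳) × (Fin n → 𝒴s) × (Fin n → 𝒴c)) → _)
        = fun ω => (fun f : Fin (i : ℕ) → 𝒴s =>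
            (fun t => Sum.inl (f t) : Fin (i : ℕ) → 𝒴s ⊕ 𝒴c))
          ((fun ω : M × (Fin n → 𝒳) × (Fin n → 𝒴s) × (Fin n → 𝒴c) =>
            fun t : Fin (i : ℕ) => ω.2.2.1 ⟨(t : ℕ), Nat.lt_trans t.isLt i.isLt⟩) ω) := by
      funext ω t
      simp [hybF, t.isLt]
    rw [heq, condMutInf_comp₁ p _ (fun ω => ω.2.2.2 i) (fun ω => ω.1) he]
  rw [h0, hn]
  have mono : ∀ k : ℕ, k ≤ (i : ℕ) →
      condMutInf p (hybF i 0) (fun ω => ω.2.2.2 i) (fun ω => ω.1)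
        ≤ condMutInf p (hybF i k) (fun ω => ω.2.2.2 i) (fun ω => ω.1) := by
    intro k
    induction k with
    | zero => intro _; exact le_refl _
    | succ k ih =>
      intro hk1
      have hk : k < (i : ℕ) := Nat.lt_of_succ_le hk1
      exact le_trans (ih (Nat.le_of_lt hk))
        (step17 q hq0 hq1 hln ν hν0 i k hk)
  exact mono (i : ℕ) (le_refl _)
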